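/- Let ⟨·,·⟩ be a positive definite inner product on the finite-dimensional real vector space V, and let A be an algebraic curvature tensor on (V,⟨·,·⟩) such that 𝔐 = (V,⟨·,·⟩,A) is Jacobi–Tsankov. Then A = 0. -/
import Mathlib


noncomputable section

/-- The Jacobi operator `J(x) : y ↦ 𝒜(y,x)x` of a (tri)linear curvature operator `𝒜`. -/
def jacobiOp {V : Type*} [AddCommGroup V] [Module ℝ V]
    (Aop : V →ₗ[ℝ] V →ₗ[ℝ] V →ₗ[ℝ] V) (x : V) : V →ₗ[ℝ] V where
  toFun y := Aop y x x
  map_add' y z := by simp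
  map_smul' c y := by simp

/-- The polarized Jacobi operator `J(x,y) : z ↦ ½(𝒜(z,x)y + 𝒜(z,y)x)`. -/
def jacobiPol {V : Type*} [AddCommGroup V] [Module ℝ V]
    (Aop : V →ₗ[ℝ] V →ₗ[ℝ] V →ₗ[ℝ] V) (x y : V) : V →ₗ[ℝ] V where
  toFun z := (1/2 : ℝ) • (Aop z x y + Aop z y x)
  map_add' a b := by simp [smul_add]; abel
  map_smul' c a := by simp [smul_add, smul_comm c]

/-- If `⟨·,·⟩` is positive definite and `𝔐 = (V,⟨·,·⟩,A)` is
Jacobi–Tsankov, then `A = 0`. -/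
theorem jacobiTsankov_riemannian_flat
    {V : Type*} [AddCommGroup V] [Module ℝ V] [FiniteDimensional ℝ V]
    -- a nondegenerate symmetric bilinear form ⟨·,·⟩ on V
    (B : LinearMap.BilinForm ℝ V)
    (hBsymm : ∀ x y : V, B x y = B y x)
    (hBnd : ∀ x : V, (∀ y : V, B x y = 0) → x = 0)
    -- the curvature operator 𝒜, with `A x y z w = ⟨𝒜(x,y)z, w⟩`
    (Aop : V →ₗ[ℝ] V →ₗ[ℝ] V →ₗ[ℝ] V)
    -- A(x,y,z,w) = -A(y,x,z,w)
    (hA1 : ∀ x y z w : V, B (Aop x y z) w = - B (Aop y x z) w)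
    -- A(x,y,z,w) = A(z,w,x,y)
    (hA2 : ∀ x y z w : V, B (Aop x y z) w = B (Aop z w x) y)
    -- first Bianchi identity
    (hA3 : ∀ x y z w : V, B (Aop x y z) w + B (Aop y z x) w + B (Aop z x y) w = 0)
    -- ⟨·,·⟩ is positive definite
    (hBpos : ∀ x : V, x ≠ 0 → 0 < B x x)
    -- 𝔐 is Jacobi–Tsankov
    (hJT : ∀ x y : V, jacobiOp Aop x ∘ₗ jacobiOp Aop y = jacobiOp Aop y ∘ₗ jacobiOp Aop x) :
    ∀ x y z w : V, B (Aop x y z) w = 0 := by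
  have hBpos' : ∀ v : V, B v v = 0 → v = 0 := by
    intro v hv
    by_contra h
    exact (hBpos v h).ne' hv
  have hdiag : ∀ u z : V, Aop u u z = 0 := by
    intro u z
    apply hBnd
    intro w
    have h := hA1 u u z w
    linarith
  have a4 : ∀ x y z w : V, B (Aop x y z) w = - B (Aop x y w) z := by
    intro x y z w
    rw [hA2 x y z w, hA1 z w x y, hA2 w z x y]
  have hsa : ∀ x y w : V, B (Aop y x x) w = B (Aop w x x) y := by
    intro x y w
    have h1 := a4 y x x w
    have h2 := hA2 y x w x
    have h3 := a4 w x x y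
    linarith
  have JTv : ∀ x y z : V, Aop (Aop z y y) x x = Aop (Aop z x x) y y := by
    intro x y z
    have h := congrArg (fun f : V →ₗ[ℝ] V => f z) (hJT x y)
    simpa [jacobiOp, LinearMap.comp_apply] using h
  have E1 : ∀ p q : V, Aop (Aop p q q) p p = 0 := by
    intro p q
    rw [JTv p q p, hdiag p p]
    simp
  have key : ∀ x y : V, Aop y x x = 0 := by
    intro x y
    apply hBpos'
    have hp := congrArg (fun v => B v y) (E1 (y + x) x)
    have hm := congrArg (fun v => B v y) (E1 (y - x) x)
    simp only [map_add, map_sub, LinearMap.add_apply, LinearMap.sub_apply,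
      hdiag, E1, map_zero, LinearMap.zero_apply, add_zero, zero_add, sub_zero,
      zero_sub, neg_neg, map_neg, LinearMap.neg_apply] at hp hm
    rw [hsa x y (Aop y x x)]
    linarith
  have s23 : ∀ x y z w : V, B (Aop y x z) w = - B (Aop y z x) w := by
    intro x y z w
    have h := congrArg (fun v => B v w) (key (x + z) y)
    simp only [map_add, LinearMap.add_apply, key, map_zero, LinearMap.zero_apply,
      zero_add, add_zero] at h
    linarith
  intro x y z w
  have h1 := hA3 x y z w
  have hb : B (Aop y z x) w = B (Aop x y z) w := by
    linarith [s23 x y z w, hA1 x y z w]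
  have hc : B (Aop z x y) w = B (Aop x y z) w := by
    linarith [s23 x z y w, hA1 z y x w, hb]
  linarith
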